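/- Let e = uv be a bridge of a connected graph G of even order whose removal yields components G₁ (containing u) and G₂ (containing v), both of odd order. If F₁ is a perfect forest of G₁ + e (the subgraph induced by V(G₁) ∪ {v}) and F₂ is a perfect forest of G₂ + e (the subgraph induced by V(G₂) ∪ {u}), then F₁ ∪ F₂ is a perfect forest of G. -/

import Mathlib

open SimpleGraph


/-- `F` is a perfect forest of `G` relative to the vertex set `S`. -/
def IsPerfectForestOn {V : Type*} (G F : SimpleGraph V) (S : Set V) : Prop :=
  F ≤ G ∧ F.support ⊆ S ∧ F.IsAcyclic ∧
    (∀ v ∈ S, Odd ((F.neighborSet v).ncard)) ∧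
    (∀ x ∈ S, ∀ y ∈ S, G.Adj x y → F.Reachable x y → F.Adj x y)

/-- If e = uv is a bridge of a connected graph G of even order whose deletion leaves two
components G₁ ∋ u and G₂ ∋ v of odd order, and F₁, F₂ are perfect forests of G₁ + e
(induced on V(G₁) ∪ {v}) and G₂ + e (induced on V(G₂) ∪ {u}), then F₁ ∪ F₂ is a perfect
forest of G. -/
theorem stmt6 {V : Type*} [Fintype V] (G : SimpleGraph V)
    (hG : G.Connected) (heven : Even (Fintype.card V))
    (u v : V) (huv : G.Adj u v) (hbridge : G.IsBridge s(u, v))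
    (hA : Odd {x : V | (G.deleteEdges {s(u, v)}).Reachable u x}.ncard)
    (hB : Odd {x : V | (G.deleteEdges {s(u, v)}).Reachable v x}.ncard)
    (F₁ F₂ : SimpleGraph V)
    (hF₁ : IsPerfectForestOn G F₁
      ({x : V | (G.deleteEdges {s(u, v)}).Reachable u x} ∪ {v}))
    (hF₂ : IsPerfectForestOn G F₂
      ({x : V | (G.deleteEdges {s(u, v)}).Reachable v x} ∪ {u})) :
    IsPerfectForestOn G (F₁ ⊔ F₂) Set.univ := by
  classical
  set A : Set V := {x : V | (G.deleteEdges {s(u, v)}).Reachable u x} with hAdef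
  set B : Set V := {x : V | (G.deleteEdges {s(u, v)}).Reachable v x} with hBdef
  obtain ⟨hle1, hsup1, hac1, hdeg1, hind1⟩ := hF₁
  obtain ⟨hle2, hsup2, hac2, hdeg2, hind2⟩ := hF₂
  have hune : u ≠ v := huv.ne
  have hu : u ∈ A := Reachable.refl u
  have hv : v ∈ B := Reachable.refl v
  have hbr : ¬ (G.deleteEdges {s(u, v)}).Reachable u v := (SimpleGraph.isBridge_iff.mp hbridge)
  have hAB : ∀ x, x ∈ A → x ∈ B → False := by
    intro x hx hy
    exact hbr (Reachable.trans hx (Reachable.symm hy))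
  have hcover : ∀ x, x ∈ A ∨ x ∈ B := by
    have key : ∀ {a b : V} (p : G.Walk a b), (a ∈ A ∨ a ∈ B) → (b ∈ A ∨ b ∈ B) := by
      intro a b p
      induction p with
      | nil => exact id
      | @cons a c b h q ih =>
        intro hab
        apply ih
        by_cases hsc : s(a, c) = s(u, v)
        · rcases Sym2.eq_iff.mp hsc with ⟨rfl, rfl⟩ | ⟨rfl, rfl⟩
          · exact Or.inr hv
          · exact Or.inl hu
        · have hadj : (G.deleteEdges {s(u, v)}).Adj a c := by
            simp only [SimpleGraph.deleteEdges_adj, Set.mem_singleton_iff]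
            exact ⟨h, hsc⟩
          rcases hab with ha | ha
          · exact Or.inl (ha.trans hadj.reachable)
          · exact Or.inr (ha.trans hadj.reachable)
    intro x
    obtain ⟨p⟩ := hG.preconnected u x
    exact key p (Or.inl hu)
  have hcross : ∀ x y, G.Adj x y → x ∈ A → y ∈ B → x = u ∧ y = v := by
    intro x y hadj hx hy
    by_cases hs : s(x, y) = s(u, v)
    · rcases Sym2.eq_iff.mp hs with ⟨rfl, rfl⟩ | ⟨rfl, rfl⟩
      · exact ⟨rfl, rfl⟩
      · exact absurd hv (fun hv' => hAB x hx hv')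
    · have hadj' : (G.deleteEdges {s(u, v)}).Adj x y := by
        simp only [SimpleGraph.deleteEdges_adj, Set.mem_singleton_iff]
        exact ⟨hadj, hs⟩
      exact absurd (hx.trans hadj'.reachable) (fun h => hAB y h hy)
  have hcross' : ∀ x y, G.Adj x y → x ∈ B → y ∈ A → x = v ∧ y = u := by
    intro x y hadj hx hy
    obtain ⟨h1, h2⟩ := hcross y x hadj.symm hy hx
    exact ⟨h2, h1⟩
  have edge1 : ∀ x y, F₁.Adj x y → (x ∈ A ∧ y ∈ A) ∨ (x = u ∧ y = v) ∨ (x = v ∧ y = u) := by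
    intro x y hxy
    have hx : x ∈ A ∪ {v} := hsup1 ⟨y, hxy⟩
    have hy : y ∈ A ∪ {v} := hsup1 ⟨x, hxy.symm⟩
    rcases hx with hx | hx
    · rcases hy with hy | hy
      · exact Or.inl ⟨hx, hy⟩
      · simp only [Set.mem_singleton_iff] at hy
        subst hy
        exact Or.inr (Or.inl (hcross x y (hle1 hxy) hx hv))
    · simp only [Set.mem_singleton_iff] at hx
      subst hx
      rcases hy with hy | hy
      · obtain ⟨h1, h2⟩ := hcross y x (hle1 hxy.symm) hy hv
        exact Or.inr (Or.inr ⟨rfl, h1⟩)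
      · simp only [Set.mem_singleton_iff] at hy
        exact absurd (hy ▸ hxy) (SimpleGraph.irrefl F₁)
  have edge2 : ∀ x y, F₂.Adj x y → (x ∈ B ∧ y ∈ B) ∨ (x = v ∧ y = u) ∨ (x = u ∧ y = v) := by
    intro x y hxy
    have hx : x ∈ B ∪ {u} := hsup2 ⟨y, hxy⟩
    have hy : y ∈ B ∪ {u} := hsup2 ⟨x, hxy.symm⟩
    rcases hx with hx | hx
    · rcases hy with hy | hy
      · exact Or.inl ⟨hx, hy⟩
      · simp only [Set.mem_singleton_iff] at hy
        subst hy
        obtain ⟨h1, h2⟩ := hcross' x y (hle2 hxy) hx hu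
        exact Or.inr (Or.inl ⟨h1, rfl⟩)
    · simp only [Set.mem_singleton_iff] at hx
      subst hx
      rcases hy with hy | hy
      · obtain ⟨h1, h2⟩ := hcross' y x (hle2 hxy.symm) hy hu
        exact Or.inr (Or.inr ⟨rfl, h1⟩)
      · simp only [Set.mem_singleton_iff] at hy
        exact absurd (hy ▸ hxy) (SimpleGraph.irrefl F₂)
  have huv1 : F₁.Adj u v := by
    have hodd := hdeg1 v (Or.inr rfl)
    have hne : (F₁.neighborSet v).Nonempty := by
      by_contra h
      rw [Set.not_nonempty_iff_eq_empty] at h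
      rw [h, Set.ncard_empty] at hodd
      simp [Nat.odd_iff] at hodd
    obtain ⟨w, hw⟩ := hne
    rcases edge1 v w hw with ⟨h1, _⟩ | ⟨h1, _⟩ | ⟨_, h2⟩
    · exact absurd h1 (fun h => hAB v h hv)
    · exact absurd h1.symm hune
    · exact (h2 ▸ hw).symm
  have huv2 : F₂.Adj u v := by
    have hodd := hdeg2 u (Or.inr rfl)
    have hne : (F₂.neighborSet u).Nonempty := by
      by_contra h
      rw [Set.not_nonempty_iff_eq_empty] at h
      rw [h, Set.ncard_empty] at hodd
      simp [Nat.odd_iff] at hodd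
    obtain ⟨w, hw⟩ := hne
    rcases edge2 u w hw with ⟨h1, _⟩ | ⟨h1, _⟩ | ⟨_, h2⟩
    · exact absurd h1 (hAB u hu)
    · exact absurd h1 hune
    · exact h2 ▸ hw
  -- step lemmas
  have stepA : ∀ x y, (F₁ ⊔ F₂).Adj x y → s(x, y) ≠ s(u, v) → x ∈ A → y ∈ A ∧ F₁.Adj x y := by
    intro x y hxy hs hx
    rcases hxy with h | h
    · rcases edge1 x y h with ⟨h1, h2⟩ | ⟨rfl, rfl⟩ | ⟨rfl, rfl⟩
      · exact ⟨h2, h⟩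
      · exact absurd rfl hs
      · exact absurd (Sym2.eq_swap) hs
    · rcases edge2 x y h with ⟨h1, h2⟩ | ⟨rfl, rfl⟩ | ⟨rfl, rfl⟩
      · exact absurd h1 (hAB x hx)
      · exact absurd hv (fun hv' => hAB x hx hv')
      · exact absurd rfl hs
  have stepB : ∀ x y, (F₁ ⊔ F₂).Adj x y → s(x, y) ≠ s(u, v) → x ∈ B → y ∈ B ∧ F₂.Adj x y := by
    intro x y hxy hs hx
    rcases hxy with h | h
    · rcases edge1 x y h with ⟨h1, h2⟩ | ⟨rfl, rfl⟩ | ⟨rfl, rfl⟩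
      · exact absurd h1 (fun h' => hAB x h' hx)
      · exact absurd hu (fun hu' => hAB x hu' hx)
      · exact absurd (Sym2.eq_swap) hs
    · rcases edge2 x y h with ⟨h1, h2⟩ | ⟨rfl, rfl⟩ | ⟨rfl, rfl⟩
      · exact ⟨h2, h⟩
      · exact absurd (Sym2.eq_swap) hs
      · exact absurd hu (fun hu' => hAB x hu' hx)
  have walkA : ∀ (a b : V) (p : (F₁ ⊔ F₂).Walk a b), s(u, v) ∉ p.edges → a ∈ A →
      b ∈ A ∧ ∀ e ∈ p.edges, e ∈ F₁.edgeSet := by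
    intro a b p
    induction p with
    | nil => exact fun _ ha => ⟨ha, by simp⟩
    | @cons a c b h q ih =>
      intro hne ha
      rw [SimpleGraph.Walk.edges_cons, List.mem_cons] at hne
      push_neg at hne
      obtain ⟨hne1, hne2⟩ := hne
      obtain ⟨hcA, h1⟩ := stepA a c h (fun hs => hne1 hs.symm) ha
      obtain ⟨hbA, hall⟩ := ih hne2 hcA
      refine ⟨hbA, ?_⟩
      intro e he
      rw [SimpleGraph.Walk.edges_cons, List.mem_cons] at he
      rcases he with rfl | he
      · exact h1
      · exact hall e he
  have walkB : ∀ (a b : V) (p : (F₁ ⊔ F₂).Walk a b), s(u, v) ∉ p.edges → a ∈ B →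
      b ∈ B ∧ ∀ e ∈ p.edges, e ∈ F₂.edgeSet := by
    intro a b p
    induction p with
    | nil => exact fun _ ha => ⟨ha, by simp⟩
    | @cons a c b h q ih =>
      intro hne ha
      rw [SimpleGraph.Walk.edges_cons, List.mem_cons] at hne
      push_neg at hne
      obtain ⟨hne1, hne2⟩ := hne
      obtain ⟨hcB, h1⟩ := stepB a c h (fun hs => hne1 hs.symm) ha
      obtain ⟨hbB, hall⟩ := ih hne2 hcB
      refine ⟨hbB, ?_⟩
      intro e he
      rw [SimpleGraph.Walk.edges_cons, List.mem_cons] at he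
      rcases he with rfl | he
      · exact h1
      · exact hall e he
  have reach4 : ∀ (a b : V) (p : (F₁ ⊔ F₂).Walk a b),
      (a ∈ A → b ∈ A → F₁.Reachable a b) ∧
      (a ∈ A → b ∈ B → F₁.Reachable a u ∧ F₂.Reachable v b) ∧
      (a ∈ B → b ∈ A → F₂.Reachable a v ∧ F₁.Reachable u b) ∧
      (a ∈ B → b ∈ B → F₂.Reachable a b) := by
    intro a b p
    induction p with
    | @nil a =>
      exact ⟨fun _ _ => Reachable.refl a, fun h1 h2 => (hAB a h1 h2).elim,
        fun h1 h2 => (hAB a h2 h1).elim, fun _ _ => Reachable.refl a⟩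
    | @cons a c b h q ih =>
      rcases hcover a with haA | haB
      · rcases hcover c with hcA | hcB
        · have h1 : F₁.Adj a c := by
            by_cases hs : s(a, c) = s(u, v)
            · rcases Sym2.eq_iff.mp hs with ⟨rfl, rfl⟩ | ⟨rfl, rfl⟩
              · exact (hAB _ hcA hv).elim
              · exact (hAB _ haA hv).elim
            · exact (stepA a c h hs haA).2
          refine ⟨fun _ hbA => h1.reachable.trans (ih.1 hcA hbA),
            fun _ hbB => ⟨h1.reachable.trans (ih.2.1 hcA hbB).1, (ih.2.1 hcA hbB).2⟩,
            fun haB' _ => (hAB a haA haB').elim,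
            fun haB' _ => (hAB a haA haB').elim⟩
        · obtain ⟨rfl, rfl⟩ := hcross a c ((sup_le hle1 hle2) h) haA hcB
          refine ⟨fun _ hbA => (ih.2.2.1 hv hbA).2,
            fun _ hbB => ⟨Reachable.refl a, ih.2.2.2 hv hbB⟩,
            fun haB' _ => (hAB a haA haB').elim,
            fun haB' _ => (hAB a haA haB').elim⟩
      · rcases hcover c with hcA | hcB
        · obtain ⟨rfl, rfl⟩ := hcross' a c ((sup_le hle1 hle2) h) haB hcA
          refine ⟨fun haA' _ => (hAB a haA' haB).elim,
            fun haA' _ => (hAB a haA' haB).elim,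
            fun _ hbA => ⟨Reachable.refl a, ih.1 hcA hbA⟩,
            fun _ hbB => (ih.2.1 hcA hbB).2⟩
        · have h2 : F₂.Adj a c := by
            by_cases hs : s(a, c) = s(u, v)
            · rcases Sym2.eq_iff.mp hs with ⟨rfl, rfl⟩ | ⟨rfl, rfl⟩
              · exact (hAB _ hu haB).elim
              · exact (hAB _ hu hcB).elim
            · exact (stepB a c h hs haB).2
          refine ⟨fun haA' _ => (hAB a haA' haB).elim,
            fun haA' _ => (hAB a haA' haB).elim,
            fun _ hbA => ⟨h2.reachable.trans (ih.2.2.1 hcB hbA).1, (ih.2.2.1 hcB hbA).2⟩,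
            fun _ hbB => h2.reachable.trans (ih.2.2.2 hcB hbB)⟩
  refine ⟨sup_le hle1 hle2, Set.subset_univ _, ?_, ?_, ?_⟩
  · -- acyclic
    intro x c hc
    by_cases he : s(u, v) ∈ c.edges
    · have hkey : (F₁ ⊔ F₂).Adj u v ∧ ((F₁ ⊔ F₂) \ SimpleGraph.fromEdgeSet {s(u, v)}).Reachable u v :=
        SimpleGraph.adj_and_reachable_delete_edges_iff_exists_cycle.mpr ⟨x, c, hc, he⟩
      obtain ⟨p⟩ := hkey.2
      have hsub : ∀ e ∈ p.edges, e ∈ (F₁ ⊔ F₂).edgeSet := by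
        intro e he'
        exact SimpleGraph.edgeSet_mono sdiff_le (p.edges_subset_edgeSet he')
      have hq : s(u, v) ∉ (p.transfer (F₁ ⊔ F₂) hsub).edges := by
        rw [SimpleGraph.Walk.edges_transfer]
        intro hmem
        have h' := p.edges_subset_edgeSet hmem
        rw [SimpleGraph.edgeSet_sdiff] at h'
        have : s(u, v) ∈ (SimpleGraph.fromEdgeSet {s(u, v)} : SimpleGraph V).edgeSet := by
          rw [SimpleGraph.edgeSet_fromEdgeSet]
          simp [hune]
        exact h'.2 this
      exact hAB v (walkA u v (p.transfer (F₁ ⊔ F₂) hsub) hq hu).1 hv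
    · rcases hcover x with hx | hx
      · obtain ⟨-, hall⟩ := walkA x x c he hx
        exact hac1 (c.transfer F₁ hall) (hc.transfer hall)
      · obtain ⟨-, hall⟩ := walkB x x c he hx
        exact hac2 (c.transfer F₂ hall) (hc.transfer hall)
  · -- degrees
    intro w _
    have hNsup : (F₁ ⊔ F₂).neighborSet w = F₁.neighborSet w ∪ F₂.neighborSet w := by
      ext z
      simp [SimpleGraph.mem_neighborSet, SimpleGraph.sup_adj]
    rcases hcover w with hw | hw
    · by_cases hwu : w = u
      · subst hwu
        have hint : F₁.neighborSet w ∩ F₂.neighborSet w = {v} := by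
          ext z
          simp only [Set.mem_inter_iff, SimpleGraph.mem_neighborSet, Set.mem_singleton_iff]
          constructor
          · rintro ⟨h1, h2⟩
            rcases edge2 w z h2 with ⟨hb, _⟩ | ⟨hb, _⟩ | ⟨_, hb⟩
            · exact absurd hb (hAB w hw)
            · exact absurd hb hune
            · exact hb
          · rintro rfl
            exact ⟨huv1, huv2⟩
        have hcard := Set.ncard_union_add_ncard_inter (F₁.neighborSet w) (F₂.neighborSet w)
          (Set.toFinite _) (Set.toFinite _)
        rw [hint, Set.ncard_singleton] at hcard
        have ho1 := hdeg1 w (Or.inl hw)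
        have ho2 := hdeg2 w (Or.inr rfl)
        rw [hNsup]
        rw [Nat.odd_iff] at ho1 ho2 ⊢
        omega
      · have hN2 : F₂.neighborSet w = ∅ := by
          ext z
          simp only [SimpleGraph.mem_neighborSet, Set.mem_empty_iff_false, iff_false]
          intro h2
          rcases edge2 w z h2 with ⟨hb, _⟩ | ⟨hb, _⟩ | ⟨hb, _⟩
          · exact hAB w hw hb
          · exact hAB w hw (hb ▸ hv)
          · exact hwu hb
        rw [hNsup, hN2, Set.union_empty]
        exact hdeg1 w (Or.inl hw)
    · by_cases hwv : w = v
      · subst hwv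
        have hint : F₁.neighborSet w ∩ F₂.neighborSet w = {u} := by
          ext z
          simp only [Set.mem_inter_iff, SimpleGraph.mem_neighborSet, Set.mem_singleton_iff]
          constructor
          · rintro ⟨h1, h2⟩
            rcases edge1 w z h1 with ⟨hb, _⟩ | ⟨hb, _⟩ | ⟨_, hb⟩
            · exact absurd hb (fun h' => hAB w h' hw)
            · exact absurd hb.symm hune
            · exact hb
          · rintro rfl
            exact ⟨huv1.symm, huv2.symm⟩
        have hcard := Set.ncard_union_add_ncard_inter (F₁.neighborSet w) (F₂.neighborSet w)
          (Set.toFinite _) (Set.toFinite _)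
        rw [hint, Set.ncard_singleton] at hcard
        have ho1 := hdeg1 w (Or.inr rfl)
        have ho2 := hdeg2 w (Or.inl hw)
        rw [hNsup]
        rw [Nat.odd_iff] at ho1 ho2 ⊢
        omega
      · have hN1 : F₁.neighborSet w = ∅ := by
          ext z
          simp only [SimpleGraph.mem_neighborSet, Set.mem_empty_iff_false, iff_false]
          intro h1
          rcases edge1 w z h1 with ⟨hb, _⟩ | ⟨hb, _⟩ | ⟨hb, _⟩
          · exact hAB w hb hw
          · exact hAB w (hb ▸ hu) hw
          · exact hwv hb
        rw [hNsup, hN1, Set.empty_union]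
        exact hdeg2 w (Or.inl hw)
  · -- induced condition
    intro x _ y _ hadj hreach
    obtain ⟨p⟩ := hreach
    have R := reach4 x y p
    rcases hcover x with hx | hx <;> rcases hcover y with hy | hy
    · exact Or.inl (hind1 x (Or.inl hx) y (Or.inl hy) hadj (R.1 hx hy))
    · obtain ⟨rfl, rfl⟩ := hcross x y hadj hx hy
      exact Or.inl huv1
    · obtain ⟨rfl, rfl⟩ := hcross' x y hadj hx hy
      exact Or.inl huv1.symm
    · exact Or.inr (hind2 x (Or.inl hx) y (Or.inl hy) hadj (R.2.2.2 hx hy))
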